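/- arXiv:2107.08385 — 2 statements merged into one kernel-verified Lean document; each statement's English description precedes it below -/
import Mathlib

section
/- Suppose (λ, σ, u) ∈ ℝ × H × H is an eigenpair of the modified mixed formulation, i.e. −a(σ, ψ) + b(ψ, u) = 0 for all ψ ∈ H and b(σ, v) = λ⟨u, v⟩ for all v ∈ H. Then for every ψ ∈ H and every v ∈ H with v ≠ 0, the Rayleigh quotient λ^R(ψ, v) = (−a_h(ψ, ψ) + 2 b(ψ, v)) / ⟨v, v⟩ satisfies the identity: λ^R(ψ, v) − λ = (−a(ψ − σ, ψ − σ) + 2 b(ψ − σ, v − u)) / ⟨v, v⟩ − λ⟨v − u, v − u⟩ / ⟨v, v⟩ − ⟨c(ψ)ξ − c_h(ψ)ξ_h, ψ⟩ / ⟨v, v⟩. -/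
open RealInnerProductSpace

/-- Rayleigh quotient identity for the modified mixed eigenvalue formulation. -/
theorem rayleigh_quotient_identity
    {H : Type*} [NormedAddCommGroup H] [InnerProductSpace ℝ H]
    (ξ ξh : H) (hξ : ξ ≠ 0) (hξh : ξh ≠ 0)
    (c ch : H → ℝ)
    (hc : ∀ w, c w = ⟪w, ξ⟫ / ‖ξ‖ ^ 2)
    (hch : ∀ w, ch w = ⟪w, ξh⟫ / ‖ξh‖ ^ 2)
    (a ah : H → H → ℝ)
    (ha : ∀ w ψ, a w ψ = ⟪w, ψ⟫ - c w * ⟪ξ, ψ⟫)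
    (hah : ∀ w ψ, ah w ψ = ⟪w, ψ⟫ - ch w * ⟪ξh, ψ⟫)
    (b : H →ₗ[ℝ] H →ₗ[ℝ] ℝ)
    (lam : ℝ) (σ u : H)
    (heig₁ : ∀ ψ : H, -(a σ ψ) + b ψ u = 0)
    (heig₂ : ∀ v : H, b σ v = lam * ⟪u, v⟫)
    (ψ v : H) (hv : v ≠ 0) :
    (-(ah ψ ψ) + 2 * b ψ v) / ⟪v, v⟫ - lam =
      (-(a (ψ - σ) (ψ - σ)) + 2 * b (ψ - σ) (v - u)) / ⟪v, v⟫
        - lam * ⟪v - u, v - u⟫ / ⟪v, v⟫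
        - ⟪c ψ • ξ - ch ψ • ξh, ψ⟫ / ⟪v, v⟫ := by
  have hvv : (⟪v, v⟫ : ℝ) ≠ 0 := by
    exact fun h => hv (inner_self_eq_zero.mp h)
  have hsym : ∀ w z : H, a w z = a z w := by
    intro w z
    simp only [ha, hc, real_inner_comm w z, real_inner_comm w ξ, real_inner_comm z ξ]
    ring
  have h1 : a σ ψ = b ψ u := by have := heig₁ ψ; linarith
  have h1' : a ψ σ = b ψ u := by rw [hsym]; exact h1
  have h2 : a σ σ = lam * ⟪u, u⟫ := by
    have e := heig₁ σ; have e2 := heig₂ u; linarith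
  have h3 : b σ v = lam * ⟪u, v⟫ := heig₂ v
  have hexp_a : a (ψ - σ) (ψ - σ) = a ψ ψ - a ψ σ - a σ ψ + a σ σ := by
    simp only [ha, hc, inner_sub_left, inner_sub_right]
    ring
  have hexp_b : (b (ψ - σ)) (v - u) = b ψ v - b ψ u - b σ v + b σ u := by
    simp only [map_sub, LinearMap.sub_apply]
    ring
  have hthird : ⟪c ψ • ξ - ch ψ • ξh, ψ⟫ = ah ψ ψ - a ψ ψ := by
    simp only [inner_sub_left, real_inner_smul_left, ha, hah,
      real_inner_comm ξ ψ, real_inner_comm ξh ψ]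
    ring
  have hin : ⟪v - u, v - u⟫ = ⟪v, v⟫ - 2 * ⟪u, v⟫ + ⟪u, u⟫ := by
    simp only [inner_sub_left, inner_sub_right, real_inner_comm u v]
    ring
  rw [hexp_a, hexp_b, hthird, hin, h1, h1', h2, h3, heig₂ u]
  field_simp
  ring
end

section
/- Suppose (λ, σ, u) ∈ ℝ × H × H is an eigenpair of the modified mixed formulation, i.e. −a(σ, ψ) + b(ψ, u) = 0 for all ψ ∈ H and b(σ, v) = λ⟨u, v⟩ for all v ∈ H, and suppose (λ_h, σ_h, u_h) ∈ ℝ × V_h × V_h is a discrete eigenpair, i.e. −a_h(σ_h, ψ_h) + b(ψ_h, u_h) = 0 for all ψ_h ∈ V_h and b(σ_h, v_h) = λ_h⟨u_h, v_h⟩ for all v_h ∈ V_h, with ‖u_h‖ = 1. Then the eigenvalue error satisfies the identity λ_h − λ = −a(σ_h − σ, σ_h − σ) + 2 b(σ_h − σ, u_h − u) − λ‖u_h − u‖² − ⟨c(σ_h)ξ − c_h(σ_h)ξ_h, σ_h⟩. -/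
open RealInnerProductSpace

/-- Eigenvalue error identity: λ_h − λ in terms of eigenfunction errors. -/
theorem eigenvalue_error_identity
    {H : Type*} [NormedAddCommGroup H] [InnerProductSpace ℝ H]
    (ξ ξh : H) (hξ : ξ ≠ 0) (hξh : ξh ≠ 0)
    (c ch : H → ℝ)
    (hc : ∀ w, c w = ⟪w, ξ⟫ / ‖ξ‖ ^ 2)
    (hch : ∀ w, ch w = ⟪w, ξh⟫ / ‖ξh‖ ^ 2)
    (a ah : H → H → ℝ)
    (ha : ∀ w ψ, a w ψ = ⟪w, ψ⟫ - c w * ⟪ξ, ψ⟫)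
    (hah : ∀ w ψ, ah w ψ = ⟪w, ψ⟫ - ch w * ⟪ξh, ψ⟫)
    (b : H →ₗ[ℝ] H →ₗ[ℝ] ℝ)
    (Vh : Submodule ℝ H)
    (lam : ℝ) (σ u : H)
    (heig₁ : ∀ ψ : H, -(a σ ψ) + b ψ u = 0)
    (heig₂ : ∀ v : H, b σ v = lam * ⟪u, v⟫)
    (lamh : ℝ) (σh uh : H) (hσh : σh ∈ Vh) (huh : uh ∈ Vh)
    (heigh₁ : ∀ ψh ∈ Vh, -(ah σh ψh) + b ψh uh = 0)
    (heigh₂ : ∀ vh ∈ Vh, b σh vh = lamh * ⟪uh, vh⟫)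
    (hnorm : ‖uh‖ = 1) :
    lamh - lam =
      -(a (σh - σ) (σh - σ)) + 2 * b (σh - σ) (uh - u)
        - lam * ‖uh - u‖ ^ 2
        - ⟪c σh • ξ - ch σh • ξh, σh⟫ := by

  have hinner : (⟪uh, uh⟫ : ℝ) = 1 := by
    rw [real_inner_self_eq_norm_sq, hnorm]; norm_num
  have e2 : (b σh) uh = lamh := by rw [heigh₂ uh huh, hinner]; ring
  have e5 : ah σh σh = lamh := by
    have h := heigh₁ σh hσh; linarith
  have e1 : ∀ ψ, (b ψ) u = a σ ψ := fun ψ => by linarith [heig₁ ψ]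
  have e3 : (b σh) u = a σ σh := e1 σh
  have e4 : (b σ) uh = lam * ⟪u, uh⟫ := heig₂ uh
  have e6 : (b σ) u = lam * ‖u‖ ^ 2 := by
    rw [heig₂ u, real_inner_self_eq_norm_sq]
  have e7 : a σ σ = lam * ‖u‖ ^ 2 := by rw [← e1 σ, e6]
  have haexp : a (σh - σ) (σh - σ) = a σh σh - 2 * a σ σh + a σ σ := by
    simp only [ha, hc, inner_sub_left, inner_sub_right]
    rw [real_inner_comm σ σh, real_inner_comm ξ σ, real_inner_comm ξ σh]
    ring
  have hbexp : (b (σh - σ)) (uh - u)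
      = (b σh) uh - (b σh) u - (b σ) uh + (b σ) u := by
    simp only [map_sub, LinearMap.sub_apply]
    ring
  have hnexp : ‖uh - u‖ ^ 2 = 1 - 2 * ⟪u, uh⟫ + ‖u‖ ^ 2 := by
    rw [← real_inner_self_eq_norm_sq, inner_sub_left, inner_sub_right,
      inner_sub_right, hinner, real_inner_self_eq_norm_sq, real_inner_comm uh u]
    ring
  have hlast : (⟪c σh • ξ - ch σh • ξh, σh⟫ : ℝ) = ah σh σh - a σh σh := by
    rw [inner_sub_left, real_inner_smul_left, real_inner_smul_left,
      ha σh σh, hah σh σh]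
    ring
  rw [haexp, hbexp, hnexp, hlast, e2, e3, e4, e5, e6, e7]
  ring
end
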